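/- Let φ : ℝ → ℝ be of class C¹ with φ' ∈ L¹(ℝ), let a ≥ 0, and let τ : ℝ → ℝ be a measurable map with |τ(y) − y| ≤ a for all y ∈ ℝ. Then ∫_ℝ |φ(τ(y)) − φ(y)| dy ≤ 2a ‖φ'‖_{L¹(ℝ)}. -/

import Mathlib

open MeasureTheory

/-- If `φ : ℝ → ℝ` is `C¹` with `φ' ∈ L¹(ℝ)`, `a ≥ 0` and `τ : ℝ → ℝ` is measurable with
`|τ(y) − y| ≤ a` for all `y`, then `∫ |φ(τ(y)) − φ(y)| dy ≤ 2a ‖φ'‖_{L¹}`. -/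
theorem stmt_16 (φ : ℝ → ℝ) (hφ : ContDiff ℝ 1 φ)
    (hφ' : Integrable (deriv φ))
    (a : ℝ) (ha : 0 ≤ a) (τ : ℝ → ℝ) (hτmeas : Measurable τ)
    (hτ : ∀ y : ℝ, |τ y - y| ≤ a) :
    ∫⁻ y : ℝ, ENNReal.ofReal |φ (τ y) - φ y|
      ≤ ENNReal.ofReal (2 * a * ∫ u : ℝ, |deriv φ u|) := by
  have hderiv_cont : Continuous (deriv φ) := hφ.continuous_deriv le_rfl
  have hg : Measurable fun u : ℝ => ENNReal.ofReal |deriv φ u| :=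
    (hderiv_cont.abs.measurable).ennreal_ofReal
  -- pointwise bound
  have hf : ∀ y : ℝ, ENNReal.ofReal |φ (τ y) - φ y|
      ≤ ∫⁻ u in Set.Icc (y - a) (y + a), ENNReal.ofReal |deriv φ u| := by
    intro y
    have hτy := abs_le.mp (hτ y)
    have hsub : Set.uIoc y (τ y) ⊆ Set.Icc (y - a) (y + a) := by
      intro x hx
      rcases Set.uIoc_subset_uIcc hx with ⟨h1, h2⟩
      constructor
      · have : min y (τ y) ≥ y - a := le_min (by linarith) (by linarith)
        linarith [le_trans this h1]
      · have : max y (τ y) ≤ y + a := max_le (by linarith) (by linarith)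
        linarith [le_trans h2 this]
    have hFTC : φ (τ y) - φ y = ∫ u in y..(τ y), deriv φ u := by
      rw [intervalIntegral.integral_deriv_eq_sub
        (fun x _ => (hφ.differentiable one_ne_zero).differentiableAt)
        (hφ'.intervalIntegrable)]
    have h1 : |φ (τ y) - φ y| ≤ ∫ u in Set.uIoc y (τ y), |deriv φ u| := by
      rw [hFTC]
      simpa using intervalIntegral.norm_integral_le_integral_norm_uIoc
        (f := deriv φ) (a := y) (b := τ y) (μ := volume)
    have h2 : ∫ u in Set.uIoc y (τ y), |deriv φ u|
        ≤ ∫ u in Set.Icc (y - a) (y + a), |deriv φ u| := by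
      apply setIntegral_mono_set (hφ'.abs.integrableOn)
        (Filter.Eventually.of_forall fun u => abs_nonneg _)
        (Filter.Eventually.of_forall hsub)
    calc ENNReal.ofReal |φ (τ y) - φ y|
        ≤ ENNReal.ofReal (∫ u in Set.Icc (y - a) (y + a), |deriv φ u|) :=
          ENNReal.ofReal_le_ofReal (h1.trans h2)
      _ = ∫⁻ u in Set.Icc (y - a) (y + a), ENNReal.ofReal |deriv φ u| :=
          ofReal_integral_eq_lintegral_ofReal (hφ'.abs.integrableOn)
            (Filter.Eventually.of_forall fun u => abs_nonneg _)
  calc ∫⁻ y : ℝ, ENNReal.ofReal |φ (τ y) - φ y|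
      ≤ ∫⁻ y : ℝ, ∫⁻ u in Set.Icc (y - a) (y + a), ENNReal.ofReal |deriv φ u| :=
        lintegral_mono hf
    _ = ∫⁻ y : ℝ, ∫⁻ u : ℝ, (Set.Icc (y - a) (y + a)).indicator
          (fun u => ENNReal.ofReal |deriv φ u|) u := by
        congr 1; ext y
        rw [lintegral_indicator measurableSet_Icc]
    _ = ∫⁻ u : ℝ, ∫⁻ y : ℝ, (Set.Icc (y - a) (y + a)).indicator
          (fun u => ENNReal.ofReal |deriv φ u|) u := by
        apply lintegral_lintegral_swap
        have hset : MeasurableSet {p : ℝ × ℝ | p.1 - a ≤ p.2 ∧ p.2 ≤ p.1 + a} :=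
          (measurableSet_le (measurable_fst.sub measurable_const) measurable_snd).inter
            (measurableSet_le measurable_snd (measurable_fst.add measurable_const))
        have heq : (Function.uncurry fun (y u : ℝ) =>
            (Set.Icc (y - a) (y + a)).indicator
              (fun u => ENNReal.ofReal |deriv φ u|) u)
            = Set.indicator {p : ℝ × ℝ | p.1 - a ≤ p.2 ∧ p.2 ≤ p.1 + a}
              (fun p => ENNReal.ofReal |deriv φ p.2|) := by
          ext p
          simp only [Function.uncurry, Set.indicator_apply, Set.mem_Icc,
            Set.mem_setOf_eq]
        rw [heq]
        exact ((hg.comp measurable_snd).indicator hset).aemeasurable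
    _ = ∫⁻ u : ℝ, ENNReal.ofReal |deriv φ u| * ENNReal.ofReal (2 * a) := by
        congr 1; ext u
        have : ∀ y : ℝ, (Set.Icc (y - a) (y + a)).indicator
            (fun u => ENNReal.ofReal |deriv φ u|) u
            = (Set.Icc (u - a) (u + a)).indicator
              (fun _ => ENNReal.ofReal |deriv φ u|) y := by
          intro y
          have : u ∈ Set.Icc (y - a) (y + a) ↔ y ∈ Set.Icc (u - a) (u + a) := by
            simp only [Set.mem_Icc]; constructor <;> intro ⟨h1, h2⟩ <;>
              constructor <;> linarith
          by_cases h : u ∈ Set.Icc (y - a) (y + a)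
          · rw [Set.indicator_of_mem h, Set.indicator_of_mem (this.mp h)]
          · rw [Set.indicator_of_notMem h,
              Set.indicator_of_notMem (fun hc => h (this.mpr hc))]
        simp_rw [this]
        rw [lintegral_indicator measurableSet_Icc, setLIntegral_const,
          Real.volume_Icc]
        congr 1
        ring_nf
    _ = ENNReal.ofReal (2 * a) * ∫⁻ u : ℝ, ENNReal.ofReal |deriv φ u| := by
        rw [lintegral_mul_const _ hg, mul_comm]
    _ = ENNReal.ofReal (2 * a) * ENNReal.ofReal (∫ u : ℝ, |deriv φ u|) := by
        rw [ofReal_integral_eq_lintegral_ofReal (hφ'.abs)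
          (Filter.Eventually.of_forall fun u => abs_nonneg _)]
    _ = ENNReal.ofReal (2 * a * ∫ u : ℝ, |deriv φ u|) := by
        rw [← ENNReal.ofReal_mul (by positivity)]
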